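/- arXiv:2506.02630 — 5 statements merged into one kernel-verified Lean document; each statement's English description precedes it below -/
import Mathlib

section
/- For every fixed x ∈ ℝ with x ≠ 0, the rescaled HAM Bregman potential (α/ln α)·R_α(x) converges to |x| as α → ∞, where R_α(x) = ((α|x|+1)·ln(α|x|+1) − α|x|)/α². -/
noncomputable def RHam (α x : ℝ) : ℝ :=
  ((α * |x| + 1) * Real.log (α * |x| + 1) - α * |x|) / α ^ 2

/-- For fixed `x ≠ 0`, the rescaled potential `(α/ln α)·R_α(x)` converges to `|x|`
as `α → ∞`. -/
theorem ham_bregman_limit_alpha_infty (x : ℝ) (hx : x ≠ 0) :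
    Filter.Tendsto (fun α : ℝ => (α / Real.log α) * RHam α x) Filter.atTop
      (nhds |x|) := by
  have hx0 : (0:ℝ) < |x| := abs_pos.mpr hx
  -- auxiliary limits
  have hlog : Filter.Tendsto Real.log Filter.atTop Filter.atTop := Real.tendsto_log_atTop
  have hA : Filter.Tendsto (fun α : ℝ => (Real.log α)⁻¹) Filter.atTop (nhds 0) :=
    hlog.inv_tendsto_atTop
  have hB : Filter.Tendsto (fun α : ℝ => Real.log (|x| + α⁻¹)) Filter.atTop
      (nhds (Real.log |x|)) := by
    have h1 : Filter.Tendsto (fun α : ℝ => |x| + α⁻¹) Filter.atTop (nhds |x|) := by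
      simpa using (tendsto_const_nhds (x := |x|)).add tendsto_inv_atTop_zero
    exact ((Real.continuousAt_log hx0.ne').tendsto).comp h1
  have hC : Filter.Tendsto (fun α : ℝ => (α * Real.log α)⁻¹) Filter.atTop (nhds 0) := by
    have : Filter.Tendsto (fun α : ℝ => α * Real.log α) Filter.atTop Filter.atTop :=
      Filter.tendsto_id.atTop_mul_atTop₀ hlog
    exact this.inv_tendsto_atTop
  have hD : Filter.Tendsto (fun α : ℝ => α⁻¹) Filter.atTop (nhds 0) :=
    tendsto_inv_atTop_zero
  have hg : Filter.Tendsto (fun α : ℝ =>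
      |x| + α⁻¹ + |x| * (Real.log (|x| + α⁻¹) * (Real.log α)⁻¹)
        + Real.log (|x| + α⁻¹) * (α * Real.log α)⁻¹ - |x| * (Real.log α)⁻¹)
      Filter.atTop (nhds |x|) := by
    have := (((((tendsto_const_nhds (x := |x|)).add hD).add
        ((tendsto_const_nhds (x := |x|)).mul (hB.mul hA))).add (hB.mul hC)).sub
        ((tendsto_const_nhds (x := |x|)).mul hA))
    simpa using this
  refine hg.congr' ?_
  filter_upwards [Filter.eventually_ge_atTop (2:ℝ)] with α hα
  have hα0 : (0:ℝ) < α := by linarith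
  have hlogα : Real.log α ≠ 0 := by
    have : (1:ℝ) < α := by linarith
    exact (Real.log_pos this).ne'
  have hsplit : Real.log (α * |x| + 1) = Real.log α + Real.log (|x| + α⁻¹) := by
    have h1 : α * |x| + 1 = α * (|x| + α⁻¹) := by
      field_simp
    rw [h1, Real.log_mul hα0.ne' (by positivity)]
  unfold RHam
  rw [hsplit]
  field_simp
  ring
end

section
/- Let f: ℝⁿ → ℝ be continuously differentiable and satisfy the Polyak–Łojasiewicz inequality (1/2)‖∇f(x)‖² ≥ Λ·(f(x) − f*) with constant Λ > 0, where f* = inf f. Suppose x: [0,∞) → ℝⁿ solves the HAM gradient flow dx_i/dt = −(1 + α|x_i(t)|)·∂_i f(x(t)) with α ≥ 0. Then for all t ≥ 0, f(x(t)) − f* ≤ (f(x(0)) − f*)·exp(−2Λt). -/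
/-- Under the PL inequality, the HAM gradient flow converges linearly:
`f(x(t)) − f* ≤ (f(x(0)) − f*)·exp(−2Λt)` for all `t ≥ 0`. -/
theorem ham_flow_pl_convergence (n : ℕ) (α Λ fstar : ℝ) (hα : 0 ≤ α) (hΛ : 0 < Λ)
    (f : EuclideanSpace ℝ (Fin n) → ℝ) (hf : ContDiff ℝ 1 f)
    (hfstar : fstar = ⨅ y : EuclideanSpace ℝ (Fin n), f y)
    (hPL : ∀ y : EuclideanSpace ℝ (Fin n),
      Λ * (f y - fstar) ≤ (1 / 2) * ‖gradient f y‖ ^ 2)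
    (x : ℝ → EuclideanSpace ℝ (Fin n))
    (hx : ∀ t : ℝ, ∀ i : Fin n, HasDerivAt (fun s => x s i)
      (-(1 + α * |x t i|) * gradient f (x t) i) t) :
    ∀ t : ℝ, 0 ≤ t →
      f (x t) - fstar ≤ (f (x 0) - fstar) * Real.exp (-2 * Λ * t) := by
  have hdiff : ∀ y, DifferentiableAt ℝ f y := fun y => (hf.differentiable one_ne_zero) y
  set g : ℝ → ℝ := fun t => f (x t) - fstar with hg
  set v : ℝ → EuclideanSpace ℝ (Fin n) :=
    fun t => WithLp.toLp 2 (fun i => -(1 + α * |x t i|) * gradient f (x t) i) with hv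
  -- x has derivative v t at t
  have hxv : ∀ t, HasDerivAt x (v t) t := by
    intro t
    let φ : EuclideanSpace ℝ (Fin n) ≃L[ℝ] (Fin n → ℝ) := EuclideanSpace.equiv (Fin n) ℝ
    have h1 : HasDerivAt (fun s => φ (x s)) (φ (v t)) t := hasDerivAt_pi.2 (fun i => hx t i)
    have h2 := φ.symm.toContinuousLinearMap.hasFDerivAt.comp_hasDerivAt t h1
    simpa [Function.comp_def, φ.symm_apply_apply] using h2
  -- derivative of g
  have hgd : ∀ t, HasDerivAt g (inner ℝ (gradient f (x t)) (v t) : ℝ) t := by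
    intro t
    have hfd := (hdiff (x t)).hasGradientAt.hasFDerivAt
    have h3 := hfd.comp_hasDerivAt t (hxv t)
    have h4 : (InnerProductSpace.toDual ℝ (EuclideanSpace ℝ (Fin n)) (gradient f (x t))) (v t)
        = (inner ℝ (gradient f (x t)) (v t) : ℝ) := InnerProductSpace.toDual_apply_apply
    rw [h4] at h3
    exact h3.sub_const fstar
  -- bound on the derivative
  have hbound : ∀ t, (inner ℝ (gradient f (x t)) (v t) : ℝ) ≤ -2 * Λ * g t := by
    intro t
    have h1 : (inner ℝ (gradient f (x t)) (v t) : ℝ)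
        ≤ -(inner ℝ (gradient f (x t)) (gradient f (x t)) : ℝ) := by
      rw [PiLp.inner_apply, PiLp.inner_apply, ← Finset.sum_neg_distrib]
      apply Finset.sum_le_sum
      intro i _
      have h2 : (1 : ℝ) ≤ 1 + α * |x t i| := by nlinarith [mul_nonneg hα (abs_nonneg (x t i))]
      simp only [RCLike.inner_apply, starRingEnd_apply, star_trivial, hv]
      nlinarith [sq_nonneg (gradient f (x t) i)]
    have h3 : (inner ℝ (gradient f (x t)) (gradient f (x t)) : ℝ) = ‖gradient f (x t)‖ ^ 2 :=
      real_inner_self_eq_norm_sq _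
    have h5 := hPL (x t)
    simp only [hg]
    nlinarith
  -- the auxiliary function h
  set h : ℝ → ℝ := fun t => g t * Real.exp (2 * Λ * t) with hh
  have hhd : ∀ t, HasDerivAt h
      ((inner ℝ (gradient f (x t)) (v t) : ℝ) * Real.exp (2 * Λ * t)
        + g t * (2 * Λ * Real.exp (2 * Λ * t))) t := by
    intro t
    have he : HasDerivAt (fun s => Real.exp (2 * Λ * s)) (2 * Λ * Real.exp (2 * Λ * t)) t := by
      have := ((hasDerivAt_id t).const_mul (2 * Λ)).exp
      simpa [mul_comm] using this
    exact (hgd t).mul he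
  have hanti : Antitone h := by
    apply antitone_of_deriv_nonpos (fun t => (hhd t).differentiableAt)
    intro t
    rw [(hhd t).deriv]
    have hb := hbound t
    have he : (0:ℝ) < Real.exp (2 * Λ * t) := Real.exp_pos _
    nlinarith
  intro t ht
  have hth : h t ≤ h 0 := hanti ht
  have h0 : h 0 = f (x 0) - fstar := by simp [hh, hg]
  have hexp : Real.exp (-2 * Λ * t) = (Real.exp (2 * Λ * t))⁻¹ := by
    rw [← Real.exp_neg]; ring_nf
  have hepos : (0:ℝ) < Real.exp (2 * Λ * t) := Real.exp_pos _
  have : f (x t) - fstar = h t * (Real.exp (2 * Λ * t))⁻¹ := by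
    field_simp [hh, hg]
    rfl
  rw [this, hexp, ← h0]
  exact mul_le_mul_of_nonneg_right hth (by positivity)
end

section
/- Let f: ℝⁿ → ℝ be continuously differentiable and satisfy the PL inequality with constant Λ > 0. Suppose x: [0,∞) → ℝⁿ solves the overparameterized gradient flow dx_i/dt = −√(x_i(t)² + γ²)·∂_i f(x(t)) with γ > 0. If m(t) := min_i √(x_i(t)² + γ²) ≥ c > 0 on [0,T], then f(x(t)) − f* ≤ (f(x(0)) − f*)·exp(−2cΛt) for t ∈ [0,T]. -/
/-- Under the PL inequality, the `m ⊙ w` overparameterized gradient flow with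
artificial learning rate `√(x_i² + γ²)` bounded below by `c` on `[0,T]`
converges at rate `exp(−2cΛt)`. -/
theorem mw_flow_pl_convergence (n : ℕ) (γ Λ c T fstar : ℝ)
    (hγ : 0 < γ) (hΛ : 0 < Λ) (hc : 0 < c)
    (f : EuclideanSpace ℝ (Fin n) → ℝ) (hf : ContDiff ℝ 1 f)
    (hfstar : fstar = ⨅ y : EuclideanSpace ℝ (Fin n), f y)
    (hPL : ∀ y : EuclideanSpace ℝ (Fin n),
      Λ * (f y - fstar) ≤ (1 / 2) * ‖gradient f y‖ ^ 2)
    (x : ℝ → EuclideanSpace ℝ (Fin n))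
    (hx : ∀ t : ℝ, ∀ i : Fin n, HasDerivAt (fun s => x s i)
      (-Real.sqrt ((x t i) ^ 2 + γ ^ 2) * gradient f (x t) i) t)
    (hm : ∀ t ∈ Set.Icc (0 : ℝ) T, ∀ i : Fin n,
      c ≤ Real.sqrt ((x t i) ^ 2 + γ ^ 2)) :
    ∀ t ∈ Set.Icc (0 : ℝ) T,
      f (x t) - fstar ≤ (f (x 0) - fstar) * Real.exp (-2 * c * Λ * t) := by
  have hfd : Differentiable ℝ f := hf.differentiable one_ne_zero
  set v : ℝ → EuclideanSpace ℝ (Fin n) := fun t =>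
    (EuclideanSpace.equiv (Fin n) ℝ).symm
      (fun i => -Real.sqrt ((x t i) ^ 2 + γ ^ 2) * gradient f (x t) i) with hv
  -- derivative of the curve x
  have hxc : ∀ t, HasDerivAt x (v t) t := by
    intro t
    have h1 : HasDerivAt (fun s => (EuclideanSpace.equiv (Fin n) ℝ) (x s))
        (fun i => -Real.sqrt ((x t i) ^ 2 + γ ^ 2) * gradient f (x t) i) t :=
      hasDerivAt_pi.2 (fun i => hx t i)
    have h2 := ((EuclideanSpace.equiv (Fin n) ℝ).symm.hasFDerivAt).comp_hasDerivAt t h1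
    exact h2
  -- derivative of t ↦ f (x t)
  have hgder : ∀ t, HasDerivAt (fun s => f (x s))
      (inner (𝕜 := ℝ) (gradient f (x t)) (v t)) t := by
    intro t
    have hg : HasGradientAt f (gradient f (x t)) (x t) := (hfd (x t)).hasGradientAt
    have := hg.hasFDerivAt.comp_hasDerivAt t (hxc t)
    simp [InnerProductSpace.toDual_apply_apply, -toDual_gradient, -inner_gradient_left] at this
    exact this
  set K := 2 * c * Λ with hK
  set g : ℝ → ℝ := fun t => f (x t) - fstar with hg
  have hgd : ∀ t, HasDerivAt g (inner (𝕜 := ℝ) (gradient f (x t)) (v t)) t :=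
    fun t => (hgder t).sub_const fstar
  set h : ℝ → ℝ := fun t => g t * Real.exp (K * t) with hh
  have hhd : ∀ t, HasDerivAt h
      (inner (𝕜 := ℝ) (gradient f (x t)) (v t) * Real.exp (K * t)
        + g t * (Real.exp (K * t) * K)) t := by
    intro t
    have he : HasDerivAt (fun s : ℝ => Real.exp (K * s)) (Real.exp (K * t) * K) t := by
      simpa using (((hasDerivAt_id t).const_mul K).exp)
    exact (hgd t).mul he
  have hinner : ∀ t, inner (𝕜 := ℝ) (gradient f (x t)) (v t)
      = ∑ i, gradient f (x t) i
          * (-Real.sqrt ((x t i) ^ 2 + γ ^ 2) * gradient f (x t) i) := by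
    intro t
    simp [hv, PiLp.inner_apply, RCLike.inner_apply, conj_trivial, -inner_gradient_left]
    exact Finset.sum_congr rfl (fun i _ => by ring)
  have hnorm : ∀ t, ‖gradient f (x t)‖ ^ 2 = ∑ i, (gradient f (x t) i) ^ 2 := by
    intro t
    rw [EuclideanSpace.norm_eq, Real.sq_sqrt (by positivity)]
    simp [sq_abs]
  have key : ∀ t ∈ Set.Icc (0 : ℝ) T,
      inner (𝕜 := ℝ) (gradient f (x t)) (v t) ≤ -(K * g t) := by
    intro t ht
    rw [hinner t]
    have h1 : ∑ i, gradient f (x t) i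
        * (-Real.sqrt ((x t i) ^ 2 + γ ^ 2) * gradient f (x t) i)
        ≤ ∑ i, -(c * (gradient f (x t) i) ^ 2) := by
      apply Finset.sum_le_sum
      intro i _
      have := hm t ht i
      nlinarith [sq_nonneg (gradient f (x t) i)]
    have h2 : ∑ i, -(c * (gradient f (x t) i) ^ 2)
        = -(c * ‖gradient f (x t)‖ ^ 2) := by
      rw [hnorm t, Finset.sum_neg_distrib, Finset.mul_sum]
    have h3 := hPL (x t)
    have hg0 : Λ * g t ≤ 1 / 2 * ‖gradient f (x t)‖ ^ 2 := h3
    rw [hK]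
    have h4 : (2 * c) * (Λ * g t) ≤ (2 * c) * (1 / 2 * ‖gradient f (x t)‖ ^ 2) :=
      mul_le_mul_of_nonneg_left hg0 (by positivity)
    calc ∑ i, gradient f (x t) i * (-Real.sqrt ((x t i) ^ 2 + γ ^ 2) * gradient f (x t) i)
        ≤ ∑ i, -(c * (gradient f (x t) i) ^ 2) := h1
      _ = -(c * ‖gradient f (x t)‖ ^ 2) := h2
      _ ≤ -(2 * c * Λ * g t) := by simp only [hg]; nlinarith [h4, hg0]
  have hanti : AntitoneOn h (Set.Icc 0 T) := by
    apply antitoneOn_of_deriv_nonpos (convex_Icc 0 T)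
    · exact fun t _ => ((hhd t).differentiableAt.continuousAt).continuousWithinAt
    · exact fun t _ => (hhd t).differentiableAt.differentiableWithinAt
    · intro t ht
      rw [interior_Icc] at ht
      have ht' : t ∈ Set.Icc (0 : ℝ) T := Set.Ioo_subset_Icc_self ht
      rw [(hhd t).deriv]
      have := key t ht'
      nlinarith [Real.exp_pos (K * t), this]
  intro t ht
  have h0T : (0 : ℝ) ≤ T := le_trans ht.1 ht.2
  have hle : h t ≤ h 0 := hanti ⟨le_refl 0, h0T⟩ ht ht.1
  have hE := Real.exp_pos (K * t)
  have hh0 : h 0 = g 0 := by simp [hh]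
  rw [hh0] at hle
  have hgoal : g t ≤ g 0 * Real.exp (-2 * c * Λ * t) := by
    have hrw : (-2 * c * Λ * t : ℝ) = -(K * t) := by rw [hK]; ring
    have hle' : g t * Real.exp (K * t) ≤ g 0 := hle
    rw [hrw, Real.exp_neg, ← sub_nonneg]
    have heq : g 0 * (Real.exp (K * t))⁻¹ - g t
        = (g 0 - g t * Real.exp (K * t)) * (Real.exp (K * t))⁻¹ := by
      field_simp
    rw [heq]
    exact mul_nonneg (by linarith) (inv_pos.2 hE).le
  exact hgoal
end

section
/- Let u_0, v_0 > 0 and define x(t) = u_0²·exp(−2G(t) − βt) − v_0²·exp(2G(t) − βt) where G(t) = ∫_0^t g(s) ds for a continuous function g, and β ≥ 0. Then x satisfies the ODE dx/dt = −2√(x(t)² + 4u_0²v_0²e^{−2βt}}·g(t)·θ(t) − βx(t) where θ(t) = 1, i.e., dx/dt = −2(u_0²e^{−2G−βt} + v_0²e^{2G−βt})·g(t) − βx(t), and u_0²e^{−2G−βt} + v_0²e^{2G−βt} = √(x(t)² + 4u_0²v_0²e^{−2βt}). -/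
/-- The hyperbolic gradient flow of the `m ⊙ w` overparameterization with weight
decay: `x(t) = u₀²e^{−2G−βt} − v₀²e^{2G−βt}` satisfies
`dx/dt = −2(u₀²e^{−2G−βt} + v₀²e^{2G−βt})·g(t) − βx(t)`, and the bracket equals
`√(x(t)² + 4u₀²v₀²e^{−2βt})`. -/
theorem mw_hyperbolic_flow (u0 v0 β : ℝ) (hu : 0 < u0) (hv : 0 < v0) (hβ : 0 ≤ β)
    (g : ℝ → ℝ) (hg : Continuous g)
    (G : ℝ → ℝ) (hG : ∀ t : ℝ, G t = ∫ s in (0:ℝ)..t, g s)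
    (x : ℝ → ℝ)
    (hx : ∀ t : ℝ, x t = u0 ^ 2 * Real.exp (-2 * G t - β * t)
      - v0 ^ 2 * Real.exp (2 * G t - β * t)) :
    ∀ t : ℝ,
      HasDerivAt x
        (-2 * (u0 ^ 2 * Real.exp (-2 * G t - β * t)
          + v0 ^ 2 * Real.exp (2 * G t - β * t)) * g t - β * x t) t ∧
      u0 ^ 2 * Real.exp (-2 * G t - β * t) + v0 ^ 2 * Real.exp (2 * G t - β * t)
        = Real.sqrt ((x t) ^ 2 + 4 * u0 ^ 2 * v0 ^ 2 * Real.exp (-2 * β * t)) := by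
  intro t
  have hGfun : G = fun t => ∫ s in (0:ℝ)..t, g s := funext hG
  have hGd : HasDerivAt G (g t) t := by
    rw [hGfun]; exact (hg.integral_hasStrictDerivAt 0 t).hasDerivAt
  set a := u0 ^ 2 * Real.exp (-2 * G t - β * t) with ha
  set b := v0 ^ 2 * Real.exp (2 * G t - β * t) with hb
  constructor
  · have h1 : HasDerivAt (fun t => -2 * G t - β * t) (-2 * g t - β) t :=
      ((hGd.const_mul (-2)).sub ((hasDerivAt_id t).const_mul β)).congr_deriv (by ring)
    have h2 : HasDerivAt (fun t => 2 * G t - β * t) (2 * g t - β) t :=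
      ((hGd.const_mul (2)).sub ((hasDerivAt_id t).const_mul β)).congr_deriv (by ring)
    have hd : HasDerivAt (fun t => u0 ^ 2 * Real.exp (-2 * G t - β * t)
        - v0 ^ 2 * Real.exp (2 * G t - β * t))
        (u0 ^ 2 * (Real.exp (-2 * G t - β * t) * (-2 * g t - β))
          - v0 ^ 2 * (Real.exp (2 * G t - β * t) * (2 * g t - β))) t :=
      ((h1.exp.const_mul (u0 ^ 2)).sub (h2.exp.const_mul (v0 ^ 2)))
    have := hd.congr_of_eventuallyEq (Filter.Eventually.of_forall fun s => (hx s))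
    refine this.congr_deriv ?_
    rw [hx t]; ring
  · have key : (x t) ^ 2 + 4 * u0 ^ 2 * v0 ^ 2 * Real.exp (-2 * β * t) = (a + b) ^ 2 := by
      have he : Real.exp (-2 * G t - β * t) * Real.exp (2 * G t - β * t)
          = Real.exp (-2 * β * t) := by
        rw [← Real.exp_add]; ring_nf
      rw [hx t, ha, hb]
      linear_combination -4 * u0 ^ 2 * v0 ^ 2 * he
    rw [key, Real.sqrt_sq (by positivity)]
end

section
/- Let f(x) = (1/2)(zᵀx − y)² on ℝⁿ with z ≠ 0, and suppose x: [0,∞) → ℝⁿ solves the HAM flow dx_i/dt = −(1+α|x_i|)·∂_i f(x) with α ≥ 0, and x(t) → x_∞ with zᵀx_∞ = y. Then for R_α(x) = Σ_i ((α|x_i|+1)ln(α|x_i|+1) − α|x_i|)/α², the quantity ∇R_α(x(t)) − ∇R_α(x(0)) lies in the span of z for all t (i.e., the flow is a mirror flow and the dual trajectory stays in span{z}). -/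
open Real Filter

noncomputable def RHamVec (n : ℕ) (α : ℝ) (v : EuclideanSpace ℝ (Fin n)) : ℝ :=
  ∑ i : Fin n, ((α * |v i| + 1) * Real.log (α * |v i| + 1) - α * |v i|) / α ^ 2

noncomputable def phiHam (α u : ℝ) : ℝ := Real.sign u * Real.log (α * |u| + 1) / α

lemma affine_hasDeriv (α c s : ℝ) : HasDerivAt (fun s : ℝ => α * s + c) α s := by
  simpa using ((hasDerivAt_id s).const_mul α).add_const c

lemma L_hasDeriv {α : ℝ} (hα : 0 < α) (s : ℝ) (hs : 0 < α * s + 1) :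
    HasDerivAt (fun s => Real.log (α * s + 1) / α) (1 / (α * s + 1)) s := by
  have h2 := ((affine_hasDeriv α 1 s).log hs.ne').div_const α
  refine h2.congr_deriv ?_
  field_simp

lemma phi_hasDeriv {α : ℝ} (hα : 0 < α) (u : ℝ) :
    HasDerivAt (phiHam α) (1 / (1 + α * |u|)) u := by
  rcases lt_trichotomy u 0 with hu | rfl | hu
  · have hpos : 0 < -α * u + 1 := by nlinarith
    have h1 := (((affine_hasDeriv (-α) 1 u).log hpos.ne').div_const α).neg
    have h2 : HasDerivAt (phiHam α) (-(-α / (-α * u + 1) / α)) u := by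
      apply h1.congr_of_eventuallyEq
      filter_upwards [eventually_lt_nhds hu] with v hv
      simp only [phiHam, Real.sign_of_neg hv, abs_of_neg hv]
      ring_nf
      simp [mul_comm]
    convert h2 using 1
    rw [abs_of_neg hu]
    rw [show -α * u + 1 = 1 + α * -u by ring]
    have hA : (0:ℝ) < 1 + α * -u := by nlinarith
    rw [neg_div, neg_div, neg_neg, div_div, div_eq_div_iff (by positivity) (by positivity)]
    ring
  · -- u = 0
    rw [hasDerivAt_iff_tendsto_slope]
    have hL : HasDerivAt (fun s => Real.log (α * s + 1) / α) 1 0 := by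
      have := L_hasDeriv hα 0 (by norm_num)
      simpa using this
    have hslopeL := hasDerivAt_iff_tendsto_slope.mp hL
    have habs : Tendsto (fun v : ℝ => |v|) (nhdsWithin 0 {(0:ℝ)}ᶜ) (nhdsWithin 0 {(0:ℝ)}ᶜ) := by
      rw [tendsto_nhdsWithin_iff]
      refine ⟨?_, ?_⟩
      · have h0 : Tendsto (fun v : ℝ => |v|) (nhds (0:ℝ)) (nhds (0:ℝ)) := by
          simpa using continuous_abs.tendsto (0:ℝ)
        exact h0.mono_left nhdsWithin_le_nhds
      · filter_upwards [self_mem_nhdsWithin] with v hv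
        simpa [abs_ne_zero] using hv
    have hcomp := hslopeL.comp habs
    have : (1:ℝ) / (1 + α * |(0:ℝ)|) = 1 := by norm_num
    rw [this]
    refine hcomp.congr' ?_
    filter_upwards [self_mem_nhdsWithin] with v hv
    have hv0 : v ≠ 0 := by simpa using hv
    simp only [Function.comp_apply, slope_def_field, phiHam]
    have h0 : Real.sign (0:ℝ) * Real.log (α * |(0:ℝ)| + 1) / α = 0 := by simp
    rw [h0]
    have hL0 : Real.log (α * (0:ℝ) + 1) / α = 0 := by simp
    rw [hL0]
    rcases lt_or_gt_of_ne hv0 with hneg | hpos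
    · rw [Real.sign_of_neg hneg, abs_of_neg hneg]
      have : -v ≠ 0 := by simpa using hv0
      field_simp
      ring
    · rw [Real.sign_of_pos hpos, abs_of_pos hpos]
      field_simp
  · have hpos : 0 < α * u + 1 := by nlinarith
    have h1 := L_hasDeriv hα u hpos
    have h2 : HasDerivAt (phiHam α) (1 / (α * u + 1)) u := by
      apply h1.congr_of_eventuallyEq
      filter_upwards [eventually_gt_nhds hu] with v hv
      simp [phiHam, Real.sign_of_pos hv, abs_of_pos hv]
    convert h2 using 2
    rw [abs_of_pos hu]; ring

noncomputable def GHam (α s : ℝ) : ℝ :=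
  ((α * s + 1) * Real.log (α * s + 1) - α * s) / α ^ 2

noncomputable def gHam (α u : ℝ) : ℝ :=
  ((α * |u| + 1) * Real.log (α * |u| + 1) - α * |u|) / α ^ 2

lemma G_hasDeriv {α : ℝ} (hα : 0 < α) (s : ℝ) (hs : 0 < α * s + 1) :
    HasDerivAt (GHam α) (Real.log (α * s + 1) / α) s := by
  have h1 := affine_hasDeriv α 1 s
  have hlog := h1.log hs.ne'
  have hprod := h1.mul hlog
  have hlin : HasDerivAt (fun s : ℝ => α * s) α s := by
    simpa using (hasDerivAt_id s).const_mul α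
  have h := (hprod.sub hlin).div_const (α ^ 2)
  refine h.congr_deriv ?_
  rw [mul_comm (α * s + 1) (α / (α * s + 1)), div_mul_cancel₀ _ hs.ne']
  field_simp
  ring

lemma G_nonneg {α : ℝ} (hα : 0 < α) {s : ℝ} (hs : 0 ≤ s) : 0 ≤ GHam α s := by
  have h1 : 0 < α * s + 1 := by nlinarith
  have h2 : 1 - (α * s + 1)⁻¹ ≤ Real.log (α * s + 1) :=
    Real.one_sub_inv_le_log_of_pos h1
  have h3 : α * s ≤ (α * s + 1) * Real.log (α * s + 1) := by
    have := mul_le_mul_of_nonneg_left h2 h1.le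
    have hinv : (α * s + 1) * (1 - (α * s + 1)⁻¹) = α * s := by
      field_simp
      ring
    linarith [hinv ▸ this]
  have : (0:ℝ) ≤ ((α * s + 1) * Real.log (α * s + 1) - α * s) := by linarith
  exact div_nonneg this (by positivity)

lemma G_le_sq {α : ℝ} (hα : 0 < α) {s : ℝ} (hs : 0 ≤ s) : GHam α s ≤ s ^ 2 := by
  have h1 : 0 < α * s + 1 := by nlinarith
  have h2 : Real.log (α * s + 1) ≤ α * s := by
    have := Real.log_le_sub_one_of_pos h1
    linarith
  have h3 : (α * s + 1) * Real.log (α * s + 1) - α * s ≤ α ^ 2 * s ^ 2 := by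
    nlinarith [Real.log_nonneg (by nlinarith : (1:ℝ) ≤ α * s + 1)]
  rw [GHam, div_le_iff₀ (by positivity)]
  nlinarith

lemma g_hasDeriv {α : ℝ} (hα : 0 < α) (u : ℝ) :
    HasDerivAt (gHam α) (phiHam α u) u := by
  rcases lt_trichotomy u 0 with hu | rfl | hu
  · have hpos : 0 < α * (-u) + 1 := by nlinarith
    have h1 := (G_hasDeriv hα (-u) hpos).comp u (hasDerivAt_neg u)
    have heq : phiHam α u = Real.log (α * -u + 1) / α * (-1) := by
      simp only [phiHam, Real.sign_of_neg hu, abs_of_neg hu]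
      ring
    rw [← heq] at h1
    apply h1.congr_of_eventuallyEq
    filter_upwards [eventually_lt_nhds hu] with v hv
    simp only [gHam, GHam, Function.comp_apply, abs_of_neg hv]
  · -- u = 0
    rw [hasDerivAt_iff_tendsto_slope]
    have hphi0 : phiHam α 0 = 0 := by simp [phiHam]
    rw [hphi0]
    apply squeeze_zero_norm' (a := fun v : ℝ => |v|)
    · filter_upwards [self_mem_nhdsWithin] with v hv
      have hv0 : v ≠ 0 := by simpa using hv
      have hg0 : gHam α 0 = 0 := by simp [gHam]
      rw [slope_def_field, hg0, sub_zero, sub_zero]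
      have habs : |v| > 0 := abs_pos.mpr hv0
      have h1 : gHam α v = GHam α |v| := by simp [gHam, GHam]
      rw [h1, Real.norm_eq_abs, abs_div, abs_of_nonneg (G_nonneg hα (abs_nonneg v))]
      rw [div_le_iff₀ habs]
      calc GHam α |v| ≤ |v| ^ 2 := G_le_sq hα (abs_nonneg v)
        _ = |v| * |v| := sq (|v|) ▸ by ring
    · have h0 : Tendsto (fun v : ℝ => |v|) (nhds (0:ℝ)) (nhds (0:ℝ)) := by
        simpa using continuous_abs.tendsto (0:ℝ)
      exact h0.mono_left nhdsWithin_le_nhds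
  · have hpos : 0 < α * u + 1 := by nlinarith
    have h1 := G_hasDeriv hα u hpos
    have heq : phiHam α u = Real.log (α * u + 1) / α := by
      simp [phiHam, Real.sign_of_pos hu, abs_of_pos hu]
    rw [← heq] at h1
    apply h1.congr_of_eventuallyEq
    filter_upwards [eventually_gt_nhds hu] with v hv
    simp only [gHam, GHam, abs_of_pos hv]

lemma R_hasGradient {n : ℕ} {α : ℝ} (hα : 0 < α) (v : EuclideanSpace ℝ (Fin n)) :
    HasGradientAt (RHamVec n α)
      (WithLp.toLp 2 (fun i => phiHam α (v i)) : EuclideanSpace ℝ (Fin n)) v := by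
  rw [hasGradientAt_iff_hasFDerivAt]
  have hterm : ∀ i : Fin n, HasFDerivAt (fun w : EuclideanSpace ℝ (Fin n) => gHam α (w i))
      (phiHam α (v i) • EuclideanSpace.proj i) v := fun i =>
    by have := (g_hasDeriv hα (v i)).comp_hasFDerivAt v (EuclideanSpace.proj (𝕜 := ℝ) i).hasFDerivAt; exact this
  have hsum : HasFDerivAt (fun w : EuclideanSpace ℝ (Fin n) => ∑ i, gHam α (w i))
      (∑ i, phiHam α (v i) • EuclideanSpace.proj (𝕜 := ℝ) i) v :=
    HasFDerivAt.fun_sum (fun i _ => hterm i)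
  have heq : (InnerProductSpace.toDual ℝ (EuclideanSpace ℝ (Fin n)))
      (WithLp.toLp 2 (fun i => phiHam α (v i)) : EuclideanSpace ℝ (Fin n))
      = ∑ i, phiHam α (v i) • EuclideanSpace.proj (𝕜 := ℝ) i := by
    apply ContinuousLinearMap.ext
    intro u
    simp [InnerProductSpace.toDual_apply_apply, PiLp.inner_apply, ContinuousLinearMap.sum_apply,
      RCLike.inner_apply, mul_comm]
  rw [heq]
  exact hsum.congr_fderiv rfl |>.congr_of_eventuallyEq (by
    filter_upwards with w
    simp [RHamVec, gHam])

lemma f_hasGradient {n : ℕ} (y : ℝ) (z : EuclideanSpace ℝ (Fin n))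
    (f : EuclideanSpace ℝ (Fin n) → ℝ)
    (hf : ∀ v, f v = (1 / 2) * (inner ℝ z v - y : ℝ) ^ 2)
    (v : EuclideanSpace ℝ (Fin n)) :
    HasGradientAt f (((inner ℝ z v : ℝ) - y) • z) v := by
  rw [hasGradientAt_iff_hasFDerivAt]
  have hinner : HasFDerivAt (fun w : EuclideanSpace ℝ (Fin n) => (inner ℝ z w : ℝ))
      (innerSL ℝ z) v := (innerSL ℝ z).hasFDerivAt
  have hsq : HasDerivAt (fun r : ℝ => (1 / 2) * (r - y) ^ 2)
      ((inner ℝ z v : ℝ) - y) ((inner ℝ z v : ℝ)) := by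
    have h1 : HasDerivAt (fun r : ℝ => (r - y) ^ 2)
        (2 * ((inner ℝ z v : ℝ) - y)) ((inner ℝ z v : ℝ)) := by
      simpa using ((hasDerivAt_id ((inner ℝ z v : ℝ))).sub_const y).fun_pow 2
    have := h1.const_mul (1 / 2 : ℝ)
    refine this.congr_deriv ?_
    ring
  have hcomp := hsq.comp_hasFDerivAt v hinner
  have heq : (InnerProductSpace.toDual ℝ (EuclideanSpace ℝ (Fin n)))
      (((inner ℝ z v : ℝ) - y) • z) = ((inner ℝ z v : ℝ) - y) • innerSL ℝ z := by
    apply ContinuousLinearMap.ext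
    intro u
    simp [InnerProductSpace.toDual_apply_apply, real_inner_smul_left]
  rw [heq]
  apply hcomp.congr_of_eventuallyEq
  filter_upwards with w
  simp [hf]

/-- For underdetermined linear regression `f(x) = (1/2)(zᵀx − y)²`, along the HAM
flow the dual (mirror) trajectory `∇R_α(x(t)) − ∇R_α(x(0))` stays in `span{z}`. -/
theorem ham_flow_mirror_span (n : ℕ) (α y : ℝ) (hα : 0 ≤ α)
    (z : EuclideanSpace ℝ (Fin n)) (hz : z ≠ 0)
    (f : EuclideanSpace ℝ (Fin n) → ℝ)
    (hf : ∀ v, f v = (1 / 2) * (inner ℝ z v - y : ℝ) ^ 2)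
    (x : ℝ → EuclideanSpace ℝ (Fin n)) (xinf : EuclideanSpace ℝ (Fin n))
    (hx : ∀ t : ℝ, ∀ i : Fin n, HasDerivAt (fun s => x s i)
      (-(1 + α * |x t i|) * gradient f (x t) i) t)
    (hlim : Filter.Tendsto x Filter.atTop (nhds xinf))
    (hinterp : (inner ℝ z xinf : ℝ) = y) :
    ∀ t : ℝ,
      gradient (RHamVec n α) (x t) - gradient (RHamVec n α) (x 0)
        ∈ Submodule.span ℝ ({z} : Set (EuclideanSpace ℝ (Fin n))) := by
  rcases hα.eq_or_lt with rfl | hα'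
  · -- α = 0 : RHamVec is constant zero
    intro t
    have hR : RHamVec n 0 = fun _ => (0:ℝ) := by
      funext v
      simp [RHamVec]
    rw [hR]
    simp only [gradient_fun_const]
    rw [sub_self]
    exact Submodule.zero_mem _
  · intro t
    set F : ℝ → ℝ := fun s => -((inner ℝ z (x s) : ℝ) - y) with hFdef
    have hxc : ∀ i : Fin n, Continuous fun s => x s i := by
      intro i
      have hd : Differentiable ℝ (fun s => x s i) := fun s => (hx s i).differentiableAt
      exact hd.continuous
    have hFcont : Continuous F := by
      have hrep : F = fun s => -((∑ i : Fin n, z i * x s i) - y) := by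
        funext s
        simp [hFdef, PiLp.inner_apply, RCLike.inner_apply, mul_comm]
      rw [hrep]
      exact ((continuous_finset_sum _ fun i _ =>
        continuous_const.mul (hxc i)).sub continuous_const).neg
    set c : ℝ → ℝ := fun t => ∫ s in (0:ℝ)..t, F s with hcdef
    have hc : ∀ t : ℝ, HasDerivAt c (F t) t := fun t =>
      (hFcont.integral_hasStrictDerivAt 0 t).hasDerivAt
    have hc0 : c 0 = 0 := intervalIntegral.integral_same
    have hgradR : ∀ s : ℝ, gradient (RHamVec n α) (x s)
        = (WithLp.toLp 2 (fun i => phiHam α (x s i)) : EuclideanSpace ℝ (Fin n)) := fun s =>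
      (R_hasGradient hα' (x s)).gradient
    have hgradf : ∀ s : ℝ, gradient f (x s) = ((inner ℝ z (x s) : ℝ) - y) • z := fun s =>
      (f_hasGradient y z f hf (x s)).gradient
    have key : ∀ i : Fin n, ∀ s : ℝ,
        phiHam α (x s i) - c s * z i = phiHam α (x 0 i) - c 0 * z i := by
      intro i
      have hderiv : ∀ s : ℝ, HasDerivAt (fun s => phiHam α (x s i) - c s * z i) 0 s := by
        intro s
        have h1 := (phi_hasDeriv hα' (x s i)).comp s (hx s i)
        have h2 := (hc s).mul_const (z i)
        have h3 := h1.sub h2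
        refine h3.congr_deriv ?_
        have hpos : (0:ℝ) < 1 + α * |x s i| := by positivity
        have hgi : gradient f (x s) i = ((inner ℝ z (x s) : ℝ) - y) * z i := by
          rw [hgradf s]
          simp [PiLp.smul_apply]
        rw [hgi, hFdef]
        field_simp
        ring
      have hdiff : Differentiable ℝ (fun s => phiHam α (x s i) - c s * z i) :=
        fun s => (hderiv s).differentiableAt
      intro s
      exact is_const_of_deriv_eq_zero hdiff (fun s => (hderiv s).deriv) s 0
    rw [Submodule.mem_span_singleton]
    refine ⟨c t, ?_⟩
    rw [hgradR t, hgradR 0]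
    ext i
    have hk := key i t
    rw [hc0, zero_mul, sub_zero] at hk
    have hsub : ((WithLp.toLp 2 (fun i => phiHam α (x t i)) : EuclideanSpace ℝ (Fin n))
        - (WithLp.toLp 2 (fun i => phiHam α (x 0 i)) : EuclideanSpace ℝ (Fin n))) i
        = phiHam α (x t i) - phiHam α (x 0 i) := rfl
    rw [hsub]
    simp only [PiLp.smul_apply, smul_eq_mul]
    linarith
end
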